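/- The spectrum of a densely defined closed paranormal operator on a nonzero complex Hilbert space is nonempty. -/

import Mathlib

open scoped InnerProductSpace
open LinearPMap

noncomputable section

variable {H : Type*} [NormedAddCommGroup H] [InnerProductSpace ℂ H] [CompleteSpace H]

/-- `T` is paranormal: `‖Tx‖² ≤ ‖T²x‖ ‖x‖` for all `x ∈ D(T²)`. -/
def Paranormal (T : H →ₗ.[ℂ] H) : Prop :=
  ∀ (x : T.domain) (h : T x ∈ T.domain), ‖T x‖ ^ 2 ≤ ‖T ⟨T x, h⟩‖ * ‖(x : H)‖

/-- The operator `T - μ • I`, with the same domain as `T`. -/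
def shiftOp (T : H →ₗ.[ℂ] H) (μ : ℂ) : H →ₗ.[ℂ] H :=
  ⟨T.domain, T.toFun - μ • T.domain.subtype⟩

/-- `T` is bijective from its domain onto `H` with a bounded everywhere-defined inverse. -/
def HasBoundedInverse (T : H →ₗ.[ℂ] H) : Prop :=
  ∃ S : H →L[ℂ] H, (∀ y : H, ∃ hy : S y ∈ T.domain, T ⟨S y, hy⟩ = y) ∧
    ∀ x : T.domain, S (T x) = (x : H)

/-- The spectrum of a (possibly unbounded) operator `T`. -/
def pSpectrum (T : H →ₗ.[ℂ] H) : Set ℂ :=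
  {μ | ¬ HasBoundedInverse (shiftOp T μ)}

/-- `μ` is an isolated point of the spectrum of `T`. -/
def IsolatedSpectralPoint (T : H →ₗ.[ℂ] H) (μ : ℂ) : Prop :=
  μ ∈ pSpectrum T ∧ ∃ ε > 0, ∀ ν ∈ pSpectrum T, ν ≠ μ → ε ≤ dist ν μ

open Classical in
/-- The resolvent `(T - z)⁻¹` as a bounded operator (junk value `0` if `z ∈ σ(T)`). -/
def resolventOp (T : H →ₗ.[ℂ] H) (z : ℂ) : H →L[ℂ] H :=
  if h : HasBoundedInverse (shiftOp T z) then h.choose else 0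

/-- The Riesz projection `E_μ = (2πi)⁻¹ ∮_{|z-μ|=r} (z - T)⁻¹ dz`
(note `(z - T)⁻¹ = -(T - z)⁻¹`). -/
def rieszProjection (T : H →ₗ.[ℂ] H) (μ : ℂ) (r : ℝ) : H →L[ℂ] H :=
  -(2 * Real.pi * Complex.I)⁻¹ • ∮ z in C(μ, r), resolventOp T z

/-- The kernel `N(T - μ I)` as a subset of `H`. -/
def kernelSet (T : H →ₗ.[ℂ] H) (μ : ℂ) : Set H :=
  {x | ∃ h : x ∈ T.domain, T ⟨x, h⟩ = μ • x}

/-- The range `R(T - μ I)` as a subset of `H`. -/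
def rangeSet (T : H →ₗ.[ℂ] H) (μ : ℂ) : Set H :=
  Set.range fun x : T.domain => T x - μ • (x : H)



omit [CompleteSpace H] in
private lemma para_pow_aux (S : H →L[ℂ] H) (hp : ∀ y : H, ‖S y‖ ^ 2 ≤ ‖y‖ * ‖S (S y)‖) :
    ∀ n : ℕ, ∀ x : H, ‖S x‖ ^ (n + 1) ≤ ‖(S ^ (n + 1)) x‖ * ‖x‖ ^ n := by
  intro n
  induction n with
  | zero => intro x; simp
  | succ n ih =>
    intro x
    rcases eq_or_ne (‖S x‖) 0 with hz | hz
    · rw [hz, zero_pow (by omega)]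
      positivity
    have hpos : 0 < ‖S x‖ ^ n := by positivity
    have h2 : ‖S (S x)‖ ^ (n + 1) ≤ ‖(S ^ (n + 2)) x‖ * ‖S x‖ ^ n := by
      have hSS : (S ^ (n + 1)) (S x) = (S ^ (n + 2)) x := by
        rw [pow_succ]; rfl
      simpa [hSS] using ih (S x)
    have key : ‖S x‖ ^ (n + 2) * ‖S x‖ ^ n ≤ (‖(S ^ (n + 2)) x‖ * ‖x‖ ^ (n + 1)) * ‖S x‖ ^ n :=
      calc ‖S x‖ ^ (n + 2) * ‖S x‖ ^ n = (‖S x‖ ^ 2) ^ (n + 1) := by ring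
        _ ≤ (‖x‖ * ‖S (S x)‖) ^ (n + 1) := pow_le_pow_left₀ (by positivity) (hp x) _
        _ = ‖x‖ ^ (n + 1) * ‖S (S x)‖ ^ (n + 1) := mul_pow _ _ _
        _ ≤ ‖x‖ ^ (n + 1) * (‖(S ^ (n + 2)) x‖ * ‖S x‖ ^ n) := by
            exact mul_le_mul_of_nonneg_left h2 (by positivity)
        _ = (‖(S ^ (n + 2)) x‖ * ‖x‖ ^ (n + 1)) * ‖S x‖ ^ n := by ring
    exact le_of_mul_le_mul_right key hpos

private lemma para_opnorm_aux (S : H →L[ℂ] H)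
    (hp : ∀ y : H, ‖S y‖ ^ 2 ≤ ‖y‖ * ‖S (S y)‖) (n : ℕ) :
    ‖S‖ ^ (n + 1) ≤ ‖S ^ (n + 1)‖ := by
  have hb : ∀ x : H, ‖S x‖ ≤ ‖S ^ (n + 1)‖ ^ ((1 : ℝ) / (n + 1)) * ‖x‖ := by
    intro x
    have h1 : ‖S x‖ ^ (n + 1) ≤ ‖S ^ (n + 1)‖ * ‖x‖ ^ (n + 1) := by
      calc ‖S x‖ ^ (n + 1) ≤ ‖(S ^ (n + 1)) x‖ * ‖x‖ ^ n := para_pow_aux S hp n x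
        _ ≤ (‖S ^ (n + 1)‖ * ‖x‖) * ‖x‖ ^ n := by
            exact mul_le_mul_of_nonneg_right ((S ^ (n + 1)).le_opNorm x) (by positivity)
        _ = ‖S ^ (n + 1)‖ * ‖x‖ ^ (n + 1) := by ring
    have hc : (‖S ^ (n + 1)‖ ^ ((1 : ℝ) / (n + 1))) ^ (n + 1) = ‖S ^ (n + 1)‖ := by
      rw [← Real.rpow_natCast (‖S ^ (n + 1)‖ ^ ((1 : ℝ) / (n + 1))) (n + 1),
        ← Real.rpow_mul (norm_nonneg _)]
      push_cast; rw [one_div_mul_cancel (by positivity), Real.rpow_one]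
    have h2 : ‖S x‖ ^ (n + 1) ≤ (‖S ^ (n + 1)‖ ^ ((1 : ℝ) / (n + 1)) * ‖x‖) ^ (n + 1) := by
      rw [mul_pow, hc]; exact h1
    have := pow_le_pow_iff_left₀ (norm_nonneg (S x))
      (by positivity : (0:ℝ) ≤ ‖S ^ (n + 1)‖ ^ ((1 : ℝ) / (n + 1)) * ‖x‖) (by omega : n + 1 ≠ 0)
    exact this.mp h2
  have := S.opNorm_le_bound (by positivity) hb
  calc ‖S‖ ^ (n + 1) ≤ (‖S ^ (n + 1)‖ ^ ((1 : ℝ) / (n + 1))) ^ (n + 1) :=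
        pow_le_pow_left₀ (norm_nonneg _) this _
    _ = ‖S ^ (n + 1)‖ := by
        rw [← Real.rpow_natCast (‖S ^ (n + 1)‖ ^ ((1 : ℝ) / (n + 1))) (n + 1),
          ← Real.rpow_mul (norm_nonneg _)]; push_cast
        rw [one_div_mul_cancel (by positivity), Real.rpow_one]

private lemma T_congr_aux (T : H →ₗ.[ℂ] H) {a b : H} (ha : a ∈ T.domain) (hb : b ∈ T.domain)
    (h : a = b) : T ⟨a, ha⟩ = T ⟨b, hb⟩ := by cases h; rfl

open scoped ENNReal NNReal in
/-- The spectrum of a densely defined closed paranormal operator on a nonzero complex Hilbert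
space is nonempty. -/
theorem stmt4 [Nontrivial H] (T : H →ₗ.[ℂ] H) (hdense : Dense (T.domain : Set H))
    (hclosed : T.IsClosed) (hpara : Paranormal T) :
    (pSpectrum T).Nonempty := by
  by_contra hne
  rw [Set.not_nonempty_iff_eq_empty] at hne
  have hall : ∀ μ : ℂ, ∃ S : H →L[ℂ] H,
      (∀ y : H, ∃ hy : S y ∈ T.domain, T ⟨S y, hy⟩ - μ • S y = y) ∧
      ∀ x : T.domain, S (T x - μ • (x : H)) = (x : H) := by
    intro μ
    by_contra h
    exact (Set.eq_empty_iff_forall_notMem.mp hne μ) h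
  obtain ⟨S, hTS, hST⟩ := hall 0
  simp only [zero_smul, sub_zero] at hTS hST
  -- S is paranormal
  have hSp : ∀ y : H, ‖S y‖ ^ 2 ≤ ‖y‖ * ‖S (S y)‖ := by
    intro y
    obtain ⟨h0, e0⟩ := hTS y
    obtain ⟨h1, e1⟩ := hTS (S y)
    have h2 : T (⟨S (S y), h1⟩ : T.domain) ∈ T.domain := by rw [e1]; exact h0
    have key := hpara ⟨S (S y), h1⟩ h2
    rw [T_congr_aux T h2 h0 e1, e0, e1] at key
    simpa using key
  -- the spectrum of S is contained in {0}
  have hspec : spectrum ℂ S ⊆ {0} := by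
    intro k hk
    simp only [Set.mem_singleton_iff]
    by_contra hk0
    rw [spectrum.mem_iff] at hk
    apply hk
    obtain ⟨R, hTR, hRT⟩ := hall k⁻¹
    have hSR : ∀ y : H, S (R y) = k • (R y - S y) := by
      intro y
      obtain ⟨hy, ey⟩ := hTR y
      have ey' : T ⟨R y, hy⟩ = y + k⁻¹ • R y := sub_eq_iff_eq_add.mp ey
      have h4 : S (y + k⁻¹ • R y) = R y := by
        have h := hST ⟨R y, hy⟩
        rw [ey'] at h
        exact h
      rw [_root_.map_add, _root_.map_smul] at h4
      have h3 : k⁻¹ • S (R y) = R y - S y :=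
        eq_sub_iff_add_eq.mpr (by rw [add_comm]; exact h4)
      calc S (R y) = k • (k⁻¹ • S (R y)) := by
            rw [smul_smul, mul_inv_cancel₀ hk0, one_smul]
        _ = k • (R y - S y) := by rw [h3]
    have hRS : ∀ y : H, R (S y) = k • (R y - S y) := by
      intro y
      obtain ⟨h0, e0⟩ := hTS y
      have h4 : R (y - k⁻¹ • S y) = S y := by
        have h := hRT ⟨S y, h0⟩
        rw [e0] at h
        exact h
      rw [_root_.map_sub, _root_.map_smul] at h4
      have h3 : k⁻¹ • R (S y) = R y - S y :=
        eq_sub_iff_add_eq.mpr (by rw [add_comm]; exact (sub_eq_iff_eq_add.mp h4).symm)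
      calc R (S y) = k • (k⁻¹ • R (S y)) := by
            rw [smul_smul, mul_inv_cancel₀ hk0, one_smul]
        _ = k • (R y - S y) := by rw [h3]
    refine isUnit_iff_exists.mpr ⟨k⁻¹ • 1 + (k⁻¹ * k⁻¹) • R, ?_, ?_⟩
    · ext y
      simp only [ContinuousLinearMap.mul_apply, ContinuousLinearMap.add_apply,
        ContinuousLinearMap.smul_apply, ContinuousLinearMap.one_apply,
        ContinuousLinearMap.sub_apply, Algebra.algebraMap_eq_smul_one, _root_.map_add,
        _root_.map_smul, ContinuousLinearMap.coe_smul', Pi.smul_apply]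
      rw [hSR y]
      match_scalars <;> field_simp <;> ring
    · ext y
      simp only [ContinuousLinearMap.mul_apply, ContinuousLinearMap.add_apply,
        ContinuousLinearMap.smul_apply, ContinuousLinearMap.one_apply,
        ContinuousLinearMap.sub_apply, Algebra.algebraMap_eq_smul_one, _root_.map_sub,
        _root_.map_smul, ContinuousLinearMap.coe_smul', Pi.smul_apply]
      rw [hRS y]
      match_scalars <;> field_simp <;> ring
  -- spectral radius is zero
  have hrad : spectralRadius ℂ S = 0 := by
    refine le_antisymm ?_ zero_le
    refine iSup₂_le fun k hk => ?_
    obtain rfl := hspec hk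
    simp
  -- Gelfand's formula forces S = 0
  have hS0 : S = 0 := by
    have ht := spectrum.pow_nnnorm_pow_one_div_tendsto_nhds_spectralRadius S
    rw [hrad] at ht
    have hev : ∀ᶠ n : ℕ in Filter.atTop,
        (‖S‖₊ : ℝ≥0∞) ≤ (‖S ^ n‖₊ : ℝ≥0∞) ^ (1 / (n : ℝ)) := by
      filter_upwards [Filter.eventually_ge_atTop 1] with n hn
      obtain ⟨m, rfl⟩ : ∃ m, n = m + 1 := ⟨n - 1, by omega⟩
      have hp := para_opnorm_aux S hSp m
      have hnn : (‖S‖₊ : ℝ≥0∞) ^ (m + 1 : ℕ) ≤ (‖S ^ (m + 1)‖₊ : ℝ≥0∞) := by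
        rw [← ENNReal.coe_pow, ENNReal.coe_le_coe, ← NNReal.coe_le_coe]
        push_cast
        exact hp
      have hne' : ((m : ℝ) + 1) ≠ 0 := by positivity
      calc (‖S‖₊ : ℝ≥0∞)
          = ((‖S‖₊ : ℝ≥0∞) ^ (m + 1 : ℕ)) ^ (1 / ((m + 1 : ℕ) : ℝ)) := by
            rw [← ENNReal.rpow_natCast _ (m + 1), ← ENNReal.rpow_mul]
            push_cast
            rw [mul_one_div_cancel hne', ENNReal.rpow_one]
        _ ≤ (‖S ^ (m + 1)‖₊ : ℝ≥0∞) ^ (1 / ((m + 1 : ℕ) : ℝ)) := by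
            exact ENNReal.rpow_le_rpow hnn (by positivity)
    have hle := ge_of_tendsto ht hev
    have hz : ‖S‖₊ = 0 := by simpa using hle
    simpa using hz
  obtain ⟨y, hy⟩ := exists_ne (0 : H)
  obtain ⟨hm, he⟩ := hTS y
  have hz : (⟨S y, hm⟩ : T.domain) = 0 := Subtype.ext (by simp [hS0])
  rw [hz] at he
  rw [show T (0 : T.domain) = 0 from T.toFun.map_zero] at he
  exact hy he.symm


end
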